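/- Let A_in, A_on be disjoint finite sets with |A_on| = d+1 ≥ 1, let g ≥ 2, and let T be any set of d+1 distinct sets Q satisfying A_in ⊆ Q ⊆ A_in ∪ A_on and |Q| = |A_in| + g. Then |⋂ T| ≠ |A_in| + g − 1. -/
import Mathlib


/-- Let `Ain`, `Aon` be disjoint finite sets with `|Aon| = d+1 ≥ 1`, let
`g ≥ 2`, and let `T` be any set of `d+1` distinct sets `Q` with `Ain ⊆ Q ⊆ Ain ∪ Aon`
and `|Q| = |Ain| + g`. Then `|⋂ T| ≠ |Ain| + g − 1`. -/
theorem stmt_5 {α : Type*} [DecidableEq α] (Ain Aon : Finset α) (d g : ℕ)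
    (hdisj : Disjoint Ain Aon) (hcard : Aon.card = d + 1) (hg : 2 ≤ g)
    (T : Finset (Finset α)) (hT : T.card = d + 1)
    (hQ : ∀ Q ∈ T, Ain ⊆ Q ∧ Q ⊆ Ain ∪ Aon ∧ Q.card = Ain.card + g) :
    (⋂ Q ∈ T, (Q : Set α)).ncard ≠ Ain.card + g - 1 := by
  have hne : T.Nonempty := Finset.card_pos.mp (by omega)
  set K : Finset α := T.inf' hne id with hK
  have hmemK : ∀ x, x ∈ K ↔ ∀ Q ∈ T, x ∈ Q := by
    intro x
    constructor
    · intro hx Q hQT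
      exact Finset.inf'_le id hQT hx
    · intro hx
      have : ({x} : Finset α) ≤ K := Finset.le_inf' hne id fun Q hQT =>
        Finset.singleton_subset_iff.mpr (hx Q hQT)
      exact Finset.singleton_subset_iff.mp this
  have hset : (⋂ Q ∈ T, (Q : Set α)) = ↑K := by
    ext x
    simp only [Set.mem_iInter, Finset.mem_coe, hmemK]
  rw [hset, Set.ncard_coe_finset]
  intro h
  have hKQ : ∀ Q ∈ T, K ⊆ Q := fun Q hQT => Finset.inf'_le id hQT
  have hAinK : Ain ⊆ K := fun x hx => (hmemK x).mpr fun Q hQT => (hQ Q hQT).1 hx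
  have hAinle : Ain.card ≤ K.card := Finset.card_le_card hAinK
  obtain ⟨Q₀, hQ₀⟩ := hne
  have hKsub : K ⊆ Ain ∪ Aon := (hKQ Q₀ hQ₀).trans (hQ Q₀ hQ₀).2.1
  have hαne : Nonempty α := ⟨(Finset.card_pos.mp (by omega : 0 < Aon.card)).choose⟩
  -- the single-element function
  set f : Finset α → α := fun Q => if h : (Q \ K).Nonempty then h.choose else Classical.arbitrary α
    with hf
  have hone : ∀ Q ∈ T, Q \ K = {f Q} := by
    intro Q hQT
    have hc : (Q \ K).card = 1 := by
      rw [Finset.card_sdiff_of_subset (hKQ Q hQT), (hQ Q hQT).2.2, h]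
      omega
    have hnonem : (Q \ K).Nonempty := Finset.card_pos.mp (by omega)
    obtain ⟨x, hx⟩ := Finset.card_eq_one.mp hc
    have : f Q ∈ Q \ K := by
      rw [hf]; simp only [dif_pos hnonem]
      exact hnonem.choose_spec
    rw [hx] at this ⊢
    rw [Finset.mem_singleton.mp this]
  have hmaps : ∀ Q ∈ T, f Q ∈ Aon \ K := by
    intro Q hQT
    have hfQ : f Q ∈ Q \ K := by rw [hone Q hQT]; exact Finset.mem_singleton_self _
    have h1 := Finset.mem_sdiff.mp hfQ
    have h2 : f Q ∈ Ain ∪ Aon := (hQ Q hQT).2.1 h1.1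
    have h3 : f Q ∉ Ain := fun hin => h1.2 (hAinK hin)
    rw [Finset.mem_sdiff]
    exact ⟨(Finset.mem_union.mp h2).resolve_left h3, h1.2⟩
  have hinj : Set.InjOn f T := by
    intro Q₁ h₁ Q₂ h₂ hfeq
    have e1 : Q₁ \ K = Q₂ \ K := by rw [hone Q₁ h₁, hone Q₂ h₂, hfeq]
    have u1 : K ∪ (Q₁ \ K) = Q₁ := Finset.union_sdiff_of_subset (hKQ Q₁ h₁)
    have u2 : K ∪ (Q₂ \ K) = Q₂ := Finset.union_sdiff_of_subset (hKQ Q₂ h₂)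
    rw [← u1, ← u2, e1]
  have hle : T.card ≤ (Aon \ K).card := Finset.card_le_card_of_injOn f hmaps hinj
  have hAonK : Aon ∩ K = K \ Ain := by
    ext x
    simp only [Finset.mem_inter, Finset.mem_sdiff]
    constructor
    · intro ⟨hxA, hxK⟩
      exact ⟨hxK, fun hin => Finset.disjoint_left.mp hdisj hin hxA⟩
    · intro ⟨hxK, hxn⟩
      exact ⟨(Finset.mem_union.mp (hKsub hxK)).resolve_left hxn, hxK⟩
  have hc1 : (K \ Ain).card = K.card - Ain.card := Finset.card_sdiff_of_subset hAinK
  have hc2 : (Aon \ K).card + (Aon ∩ K).card = Aon.card := Finset.card_sdiff_add_card_inter _ _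
  rw [hAonK, hc1] at hc2
  omega
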